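/- Let γ, z ∈ ℝ satisfy 1 + γz > 0 and set D(γ, z) = ∫₀^z t/(1 + γt)² dt. Then D(γ, z) ≥ 0 and D(γ, z) ≤ z²/(1 + γz). Moreover, if γz > 0 then also D(γ, z) ≤ z²/2 and, when γ ≠ 0, D(γ, z) ≤ γ^{−1} log(1 + γz) · z/(1 + γz), which in turn is bounded above both by z²/(1 + γz) and by γ^{−2} log(1 + γz). -/

import Mathlib

/-- `D(γ, z) = ∫₀^z t / (1 + γ t)² dt`, the partial derivative `∂_γ log u_γ(z)`. -/
noncomputable def gevDGamma (γ z : ℝ) : ℝ := ∫ t in (0:ℝ)..z, t / (1 + γ * t) ^ 2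

lemma gev_pos_on (γ z : ℝ) (h : 0 < 1 + γ * z) {t : ℝ} (ht : t ∈ Set.uIcc 0 z) :
    0 < 1 + γ * t := by
  rcases Set.mem_uIcc.mp ht with ⟨h1, h2⟩ | ⟨h1, h2⟩ <;>
    rcases le_total 0 γ with hγ | hγ <;> nlinarith

lemma gev_integrable (γ z : ℝ) (h : 0 < 1 + γ * z) :
    IntervalIntegrable (fun t => t / (1 + γ * t) ^ 2) MeasureTheory.volume 0 z := by
  apply ContinuousOn.intervalIntegrable
  apply ContinuousOn.div continuousOn_id
  · exact Continuous.continuousOn (by continuity)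
  · intro t ht
    exact pow_ne_zero 2 (gev_pos_on γ z h ht).ne'

lemma gev_formula (γ z : ℝ) (h : 0 < 1 + γ * z) (hγ : γ ≠ 0) :
    gevDGamma γ z = γ⁻¹ * (γ⁻¹ * Real.log (1 + γ * z) - z / (1 + γ * z)) := by
  have key : ∀ t ∈ Set.uIcc 0 z,
      HasDerivAt (fun t => γ⁻¹ * (γ⁻¹ * Real.log (1 + γ * t) - t / (1 + γ * t)))
        (t / (1 + γ * t) ^ 2) t := by
    intro t ht
    have hpt : 0 < 1 + γ * t := gev_pos_on γ z h ht
    have hpt' : (1 + γ * t) ≠ 0 := hpt.ne'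
    have h1 : HasDerivAt (fun t : ℝ => 1 + γ * t) γ t := by
      simpa using ((hasDerivAt_id t).const_mul γ).const_add 1
    have hlog : HasDerivAt (fun t : ℝ => Real.log (1 + γ * t)) (γ / (1 + γ * t)) t :=
      h1.log hpt.ne'
    have hdiv : HasDerivAt (fun t : ℝ => t / (1 + γ * t))
        ((1 * (1 + γ * t) - t * γ) / (1 + γ * t) ^ 2) t :=
      (hasDerivAt_id t).div h1 hpt.ne'
    have := ((hlog.const_mul γ⁻¹).sub hdiv).const_mul γ⁻¹
    refine this.congr_deriv ?_
    field_simp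
    ring
  rw [gevDGamma, intervalIntegral.integral_eq_sub_of_hasDerivAt key (gev_integrable γ z h)]
  simp

lemma gev_le_half (γ z : ℝ) (h : 0 < 1 + γ * z) (hx : 0 < γ * z) :
    gevDGamma γ z ≤ z ^ 2 / 2 := by
  have hint := gev_integrable γ z h
  rcases lt_trichotomy z 0 with hz | hz | hz
  · have hγ : γ < 0 := by nlinarith
    have hmono : (∫ t in z..(0:ℝ), t) ≤ ∫ t in z..(0:ℝ), t / (1 + γ * t) ^ 2 := by
      apply intervalIntegral.integral_mono_on hz.le (continuous_id.intervalIntegrable _ _)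
        hint.symm
      intro t ht
      obtain ⟨h1, h2⟩ := ht
      have hpt : 0 < 1 + γ * t := gev_pos_on γ z h (Set.mem_uIcc.mpr (Or.inr ⟨h1, h2⟩))
      have hgt : 0 ≤ γ * t := by nlinarith [mul_nonneg (neg_nonneg.mpr hγ.le) (neg_nonneg.mpr h2)]
      simp only [id_eq]
      rw [le_div_iff₀ (by positivity)]
      have h3 : t * (γ * t) ≤ 0 := mul_nonpos_of_nonpos_of_nonneg h2 hgt
      have h4 : t * ((γ * t) * (γ * t)) ≤ 0 :=
        mul_nonpos_of_nonpos_of_nonneg h2 (mul_nonneg hgt hgt)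
      nlinarith [h3, h4]
    have hsymm : gevDGamma γ z = -∫ t in z..(0:ℝ), t / (1 + γ * t) ^ 2 := by
      rw [gevDGamma, intervalIntegral.integral_symm]
    rw [hsymm]
    have hid : (∫ t in z..(0:ℝ), t) = ((0:ℝ) ^ 2 - z ^ 2) / 2 := integral_id
    rw [hid] at hmono
    linarith
  · exfalso; rw [hz] at hx; simp at hx
  · have hγ : 0 < γ := by nlinarith
    have hmono : gevDGamma γ z ≤ ∫ t in (0:ℝ)..z, t := by
      rw [gevDGamma]
      apply intervalIntegral.integral_mono_on hz.le hint (continuous_id.intervalIntegrable _ _)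
      intro t ht
      obtain ⟨h1, h2⟩ := ht
      simp only [id_eq]
      have hgt : 0 ≤ γ * t := mul_nonneg hγ.le h1
      exact div_le_self h1 (by nlinarith [mul_nonneg hgt hgt])
    have hid : (∫ t in (0:ℝ)..z, t) = (z ^ 2 - (0:ℝ) ^ 2) / 2 := integral_id
    rw [hid] at hmono
    linarith

/-- Bounds on `D(γ, z) = ∫₀^z t/(1 + γt)² dt` for `1 + γz > 0`:
`0 ≤ D(γ, z)`, `D(γ, z) ≤ z²/(1 + γz)`, and when `γz > 0` also `D(γ, z) ≤ z²/2` and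
(for `γ ≠ 0`) `D(γ, z) ≤ γ⁻¹ log(1 + γz) · z/(1 + γz)`, the latter expression being
bounded above both by `z²/(1 + γz)` and by `γ⁻² log(1 + γz)`. -/
theorem gevDGamma_bounds (γ z : ℝ) (h : 0 < 1 + γ * z) :
    0 ≤ gevDGamma γ z ∧
    gevDGamma γ z ≤ z ^ 2 / (1 + γ * z) ∧
    (0 < γ * z →
      gevDGamma γ z ≤ z ^ 2 / 2 ∧
      (γ ≠ 0 →
        gevDGamma γ z ≤ γ⁻¹ * Real.log (1 + γ * z) * (z / (1 + γ * z)) ∧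
        γ⁻¹ * Real.log (1 + γ * z) * (z / (1 + γ * z)) ≤ z ^ 2 / (1 + γ * z) ∧
        γ⁻¹ * Real.log (1 + γ * z) * (z / (1 + γ * z)) ≤ γ⁻¹ ^ 2 * Real.log (1 + γ * z))) := by
  rcases eq_or_ne γ 0 with hγ | hγ
  · subst hγ
    have hD0 : gevDGamma 0 z = z ^ 2 / 2 := by
      simp [gevDGamma, integral_id]
    refine ⟨by rw [hD0]; positivity, ?_, by intro hx; simp at hx⟩
    rw [hD0]
    simp only [zero_mul, add_zero, div_one]
    nlinarith [sq_nonneg z]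
  · have ha : (1 + γ * z) ≠ 0 := h.ne'
    set L := Real.log (1 + γ * z) with hL
    have hγ2 : (0:ℝ) < γ ^ 2 := by positivity
    have hU : L ≤ γ * z := by
      have := Real.log_le_sub_one_of_pos h
      linarith
    have hLo : γ * z / (1 + γ * z) ≤ L := by
      have h1 := Real.log_le_sub_one_of_pos (inv_pos.mpr h)
      rw [Real.log_inv] at h1
      have e : 1 - (1 + γ * z)⁻¹ = γ * z / (1 + γ * z) := by field_simp; ring
      linarith
    have hD : gevDGamma γ z = γ⁻¹ * (γ⁻¹ * L - z / (1 + γ * z)) := by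
      rw [gev_formula γ z h hγ, ← hL]
    have hrw : γ⁻¹ * (γ⁻¹ * L - z / (1 + γ * z)) = (L - γ * z / (1 + γ * z)) / γ ^ 2 := by
      rw [eq_div_iff (pow_ne_zero 2 hγ)]
      field_simp
    have hrw4 : γ⁻¹ * L * (z / (1 + γ * z)) = L * (γ * z) / (1 + γ * z) / γ ^ 2 := by
      rw [div_div, eq_div_iff (mul_ne_zero ha (pow_ne_zero 2 hγ))]
      field_simp
    refine ⟨?_, ?_, fun hx => ⟨gev_le_half γ z h hx, fun _ => ⟨?_, ?_, ?_⟩⟩⟩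
    · rw [hD, hrw]
      apply div_nonneg _ hγ2.le
      linarith
    · rw [hD, hrw, div_le_iff₀ hγ2]
      have e : γ * z - γ * z / (1 + γ * z) = z ^ 2 / (1 + γ * z) * γ ^ 2 := by
        field_simp
        ring
      linarith
    · rw [hD, hrw, hrw4]
      apply (div_le_div_iff_of_pos_right hγ2).mpr
      rw [sub_le_iff_le_add, ← add_div, le_div_iff₀ h]
      nlinarith [hU]
    · rw [hrw4]
      have e : z ^ 2 / (1 + γ * z) = γ ^ 2 * z ^ 2 / (1 + γ * z) / γ ^ 2 := by
        rw [mul_div_assoc, mul_div_cancel_left₀ _ (pow_ne_zero 2 hγ)]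
      rw [e]
      apply (div_le_div_iff_of_pos_right hγ2).mpr
      apply (div_le_div_iff_of_pos_right h).mpr
      nlinarith [hU, hx]
    · have hL0 : 0 ≤ L := Real.log_nonneg (by linarith)
      rw [hrw4]
      have e6 : γ⁻¹ ^ 2 * L = L / γ ^ 2 := by
        rw [inv_pow]
        ring
      rw [e6]
      apply (div_le_div_iff_of_pos_right hγ2).mpr
      rw [div_le_iff₀ h]
      nlinarith [hL0, hx]
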